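/- Let n ≥ 1 and let T be an n-dimensional simplex in ℝ^n. Then the difference body D(T) = T + (−T) satisfies vol(D(T)) = C(2n, n) · vol(T). -/

import Mathlib

open Pointwise MeasureTheory

section Aux
open Finset Nat


lemma meas_corner {n : ℕ} (r : ℝ) :
    MeasurableSet {x : Fin n → ℝ | (∀ i, 0 ≤ x i) ∧ ∑ i, x i ≤ r} := by
  have h1 : {x : Fin n → ℝ | (∀ i, 0 ≤ x i) ∧ ∑ i, x i ≤ r}
      = (⋂ i, {x | 0 ≤ x i}) ∩ {x | ∑ i, x i ≤ r} := by ext x; simp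
  rw [h1]
  exact MeasurableSet.inter
    (MeasurableSet.iInter fun i => measurableSet_le measurable_const (measurable_pi_apply i))
    (measurableSet_le (Finset.measurable_sum univ fun i _ => measurable_pi_apply i)
      measurable_const)

lemma vol_corner : ∀ (n : ℕ) (r : ℝ), 0 ≤ r →
    volume {x : Fin n → ℝ | (∀ i, 0 ≤ x i) ∧ ∑ i, x i ≤ r}
      = ENNReal.ofReal (r ^ n / (n : ℕ)!) := by
  intro n
  induction n with
  | zero =>
    intro r hr
    have : {x : Fin 0 → ℝ | (∀ i, 0 ≤ x i) ∧ ∑ i, x i ≤ r} = Set.univ := by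
      ext x; simp [hr]
    rw [this, MeasureTheory.volume_pi, Measure.pi_univ]
    simp
  | succ n ih =>
    intro r hr
    have hmp := MeasureTheory.volume_preserving_piFinSuccAbove (fun _ : Fin (n+1) => ℝ) 0
    set e := MeasurableEquiv.piFinSuccAbove (fun _ : Fin (n+1) => ℝ) 0 with he
    -- target set in product space
    set S₂ : Set (ℝ × (Fin n → ℝ)) :=
      {p | (0 ≤ p.1 ∧ ∀ i, 0 ≤ p.2 i) ∧ p.1 + ∑ i, p.2 i ≤ r} with hS₂
    have hpre : e ⁻¹' S₂ = {x : Fin (n+1) → ℝ | (∀ i, 0 ≤ x i) ∧ ∑ i, x i ≤ r} := by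
      ext x
      have hex : e x = (x 0, fun j => x j.succ) := by
        simp [he, MeasurableEquiv.piFinSuccAbove]
        rfl
      simp only [Set.mem_preimage, hex, hS₂, Set.mem_setOf_eq, Fin.sum_univ_succ,
        Fin.forall_fin_succ]
    have hS₂m : MeasurableSet S₂ := by
      apply MeasurableSet.inter
      · apply MeasurableSet.inter
        · exact measurableSet_le measurable_const measurable_fst
        · show MeasurableSet {p : ℝ × (Fin n → ℝ) | ∀ i, 0 ≤ p.2 i}
          have : {p : ℝ × (Fin n → ℝ) | ∀ i, 0 ≤ p.2 i} = ⋂ i, {p | 0 ≤ p.2 i} := by ext; simp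
          rw [this]
          exact MeasurableSet.iInter fun i =>
            measurableSet_le measurable_const (measurable_snd.eval)
      · exact measurableSet_le
          (measurable_fst.add (Finset.measurable_sum univ fun i _ =>
            (measurable_pi_apply i).comp measurable_snd)) measurable_const
    rw [← hpre, hmp.measure_preimage hS₂m.nullMeasurableSet,
      MeasureTheory.Measure.volume_eq_prod, Measure.prod_apply hS₂m]
    have hslice : ∀ t : ℝ, volume (Prod.mk t ⁻¹' S₂)
        = Set.indicator (Set.Icc (0:ℝ) r) (fun t => ENNReal.ofReal ((r - t) ^ n / (n : ℕ)!)) t := by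
      intro t
      by_cases h0 : 0 ≤ t
      · by_cases h1 : t ≤ r
        · have hset : Prod.mk t ⁻¹' S₂ = {y : Fin n → ℝ | (∀ i, 0 ≤ y i) ∧ ∑ i, y i ≤ r - t} := by
            ext y
            simp only [Set.mem_preimage, hS₂, Set.mem_setOf_eq]
            constructor
            · rintro ⟨⟨-, h⟩, hs⟩; exact ⟨h, by linarith⟩
            · rintro ⟨h, hs⟩; exact ⟨⟨h0, h⟩, by linarith⟩
          rw [hset, ih (r - t) (by linarith), Set.indicator_of_mem (Set.mem_Icc.mpr ⟨h0, h1⟩)]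
        · have hset : Prod.mk t ⁻¹' S₂ = ∅ := by
            ext y
            simp only [Set.mem_preimage, hS₂, Set.mem_setOf_eq, Set.mem_empty_iff_false, iff_false]
            rintro ⟨⟨-, h⟩, hs⟩
            have : 0 ≤ ∑ i, y i := Finset.sum_nonneg fun i _ => h i
            linarith [not_le.mp h1]
          have hnot : t ∉ Set.Icc (0:ℝ) r := by
            simp only [Set.mem_Icc, not_and]
            exact fun _ => h1
          rw [hset, Set.indicator_of_notMem hnot]
          simp
      · have hset : Prod.mk t ⁻¹' S₂ = ∅ := by
          ext y
          simp only [Set.mem_preimage, hS₂, Set.mem_setOf_eq, Set.mem_empty_iff_false, iff_false]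
          rintro ⟨⟨h, -⟩, -⟩; exact h0 h
        have hnot : t ∉ Set.Icc (0:ℝ) r := by
          simp only [Set.mem_Icc, not_and]
          exact fun h => absurd h h0
        rw [hset, Set.indicator_of_notMem hnot]
        simp
    simp only [hslice]
    rw [lintegral_indicator measurableSet_Icc]
    have hint : IntegrableOn (fun t : ℝ => (r - t) ^ n / (n : ℕ)!) (Set.Icc 0 r) := by
      apply Continuous.integrableOn_Icc
      continuity
    have hnn : 0 ≤ᵐ[volume.restrict (Set.Icc (0:ℝ) r)] fun t => (r - t) ^ n / (n : ℕ)! := by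
      filter_upwards [ae_restrict_mem measurableSet_Icc] with t ht
      have : 0 ≤ r - t := by linarith [ht.2]
      positivity
    rw [← MeasureTheory.ofReal_integral_eq_lintegral_ofReal hint hnn]
    congr 1
    rw [MeasureTheory.integral_Icc_eq_integral_Ioc, ← intervalIntegral.integral_of_le hr,
      intervalIntegral.integral_div, intervalIntegral.integral_comp_sub_left (fun x => x ^ n) r]
    simp only [sub_self, sub_zero, integral_pow]
    rw [Nat.factorial_succ]
    have h1 : ((n:ℝ) + 1) ≠ 0 := by positivity
    have h2 : ((n ! : ℕ) : ℝ) ≠ 0 := Nat.cast_ne_zero.mpr (Nat.factorial_ne_zero n)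
    field_simp
    rw [zero_pow (Nat.succ_ne_zero n)]
    push_cast
    ring


lemma meas_corner' {ι : Type*} [Fintype ι] (r : ℝ) :
    MeasurableSet {x : ι → ℝ | (∀ i, 0 ≤ x i) ∧ ∑ i, x i ≤ r} := by
  have h1 : {x : ι → ℝ | (∀ i, 0 ≤ x i) ∧ ∑ i, x i ≤ r}
      = (⋂ i, {x | 0 ≤ x i}) ∩ {x | ∑ i, x i ≤ r} := by ext x; simp
  rw [h1]
  exact MeasurableSet.inter
    (MeasurableSet.iInter fun i => measurableSet_le measurable_const (measurable_pi_apply i))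
    (measurableSet_le (Finset.measurable_sum univ fun i _ => measurable_pi_apply i)
      measurable_const)

lemma vol_corner' (ι : Type*) [Fintype ι] (r : ℝ) (hr : 0 ≤ r) :
    volume {x : ι → ℝ | (∀ i, 0 ≤ x i) ∧ ∑ i, x i ≤ r}
      = ENNReal.ofReal (r ^ (Fintype.card ι) / (Fintype.card ι)!) := by
  have f : Fin (Fintype.card ι) ≃ ι := (Fintype.equivFin ι).symm
  have hmp := MeasureTheory.volume_measurePreserving_piCongrLeft (fun _ : ι => ℝ) f
  set e := MeasurableEquiv.piCongrLeft (fun _ : ι => ℝ) f with he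
  rw [← hmp.measure_preimage (meas_corner' r).nullMeasurableSet]
  have hpre : e ⁻¹' {x : ι → ℝ | (∀ i, 0 ≤ x i) ∧ ∑ i, x i ≤ r}
      = {x : Fin (Fintype.card ι) → ℝ | (∀ i, 0 ≤ x i) ∧ ∑ i, x i ≤ r} := by
    ext x
    have hcoe : ∀ j, e x (f j) = x j := by
      intro j
      rw [he, MeasurableEquiv.coe_piCongrLeft]
      exact Equiv.piCongrLeft_apply_apply (fun _ : ι => ℝ) f x j
    simp only [Set.mem_preimage, Set.mem_setOf_eq]
    constructor
    · rintro ⟨h1, h2⟩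
      refine ⟨fun j => by rw [← hcoe j]; exact h1 (f j), ?_⟩
      calc ∑ j, x j = ∑ j, e x (f j) := by simp [hcoe]
        _ = ∑ i, e x i := Fintype.sum_equiv f _ _ fun j => rfl
        _ ≤ r := h2
    · rintro ⟨h1, h2⟩
      refine ⟨fun i => ?_, ?_⟩
      · have := h1 (f.symm i)
        rwa [← hcoe (f.symm i), f.apply_symm_apply] at this
      calc ∑ i, e x i = ∑ j, e x (f j) := (Fintype.sum_equiv f _ _ fun j => rfl).symm
        _ = ∑ j, x j := by simp [hcoe]
        _ ≤ r := h2
  rw [hpre, vol_corner _ r hr]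


lemma vol_split {n : ℕ} (A : Finset (Fin n)) :
    volume {x : Fin n → ℝ | (∀ i, 0 ≤ x i) ∧ (∑ i ∈ A, x i ≤ 1 ∧ ∑ i ∈ Aᶜ, x i ≤ 1)}
      = ENNReal.ofReal (1 / (A.card)!) * ENNReal.ofReal (1 / ((n - A.card))!) := by
  classical
  have hmp := MeasureTheory.volume_preserving_piEquivPiSubtypeProd
    (fun _ : Fin n => ℝ) (fun i => i ∈ A)
  set e := MeasurableEquiv.piEquivPiSubtypeProd (fun _ : Fin n => ℝ) (fun i => i ∈ A) with he
  set S₁ : Set ({i : Fin n // i ∈ A} → ℝ) := {y | (∀ i, 0 ≤ y i) ∧ ∑ i, y i ≤ 1} with hS₁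
  set S₂ : Set ({i : Fin n // ¬ i ∈ A} → ℝ) := {y | (∀ i, 0 ≤ y i) ∧ ∑ i, y i ≤ 1} with hS₂
  have hpre : e ⁻¹' (S₁ ×ˢ S₂)
      = {x : Fin n → ℝ | (∀ i, 0 ≤ x i) ∧ (∑ i ∈ A, x i ≤ 1 ∧ ∑ i ∈ Aᶜ, x i ≤ 1)} := by
    ext x
    have hex : e x = (fun i => x i.1, fun i => x i.1) := rfl
    have hsum1 : ∑ i : {i : Fin n // i ∈ A}, x i.1 = ∑ i ∈ A, x i := by
      rw [← Finset.sum_coe_sort A fun i => x i]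
    have hsum2 : ∑ i : {i : Fin n // ¬ i ∈ A}, x i.1 = ∑ i ∈ Aᶜ, x i := by
      rw [← Finset.sum_coe_sort Aᶜ fun i => x i]
      exact Fintype.sum_equiv
        (Equiv.subtypeEquivRight (fun i => Finset.mem_compl.symm) :
          {i : Fin n // ¬ i ∈ A} ≃ {i : Fin n // i ∈ Aᶜ}) _ _ (fun i => rfl)
    simp only [Set.mem_preimage, hex, Set.mem_prod, hS₁, hS₂, Set.mem_setOf_eq, hsum1, hsum2]
    constructor
    · rintro ⟨⟨h1, h2⟩, ⟨h3, h4⟩⟩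
      refine ⟨fun i => ?_, h2, h4⟩
      by_cases hi : i ∈ A
      · exact h1 ⟨i, hi⟩
      · exact h3 ⟨i, hi⟩
    · rintro ⟨h1, h2, h3⟩
      exact ⟨⟨fun i => h1 i.1, h2⟩, ⟨fun i => h1 i.1, h3⟩⟩
  rw [← hpre, hmp.measure_preimage (((meas_corner' 1).prod (meas_corner' 1)).nullMeasurableSet),
    MeasureTheory.Measure.volume_eq_prod, Measure.prod_prod]
  have h1 := vol_corner' {i : Fin n // i ∈ A} 1 zero_le_one
  have h2 := vol_corner' {i : Fin n // ¬ i ∈ A} 1 zero_le_one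
  have hc1 : Fintype.card {i : Fin n // i ∈ A} = A.card := Fintype.card_coe A
  have hc2 : Fintype.card {i : Fin n // ¬ i ∈ A} = n - A.card := by
    simp [Fintype.card_subtype_compl, Fintype.card_coe]
  rw [hc1, one_pow] at h1
  rw [hc2, one_pow] at h2
  congr 1
  · convert h1 using 2
    congr!


def DA {n : ℕ} (A : Finset (Fin n)) : Set (Fin n → ℝ) :=
  {x | (∀ i ∈ A, 0 ≤ x i) ∧ (∀ i ∉ A, x i ≤ 0) ∧ ∑ i ∈ A, x i ≤ 1 ∧ ∑ i ∈ Aᶜ, (-x i) ≤ 1}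

lemma meas_DA {n : ℕ} (A : Finset (Fin n)) : MeasurableSet (DA A) := by
  have h : DA A = (⋂ i ∈ A, {x : Fin n → ℝ | 0 ≤ x i}) ∩ ((⋂ i ∈ Aᶜ, {x | x i ≤ 0}) ∩
      ({x | ∑ i ∈ A, x i ≤ 1} ∩ {x | ∑ i ∈ Aᶜ, (-x i) ≤ 1})) := by
    ext x
    simp only [DA, Set.mem_setOf_eq, Set.mem_inter_iff, Set.mem_iInter, Finset.mem_compl]
  rw [h]
  refine MeasurableSet.inter ?_ (MeasurableSet.inter ?_ (MeasurableSet.inter ?_ ?_))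
  · exact MeasurableSet.biInter (Set.to_countable _)
      fun i _ => measurableSet_le measurable_const (measurable_pi_apply i)
  · exact MeasurableSet.biInter (Set.to_countable _)
      fun i _ => measurableSet_le (measurable_pi_apply i) measurable_const
  · exact measurableSet_le (Finset.measurable_sum A fun i _ => measurable_pi_apply i)
      measurable_const
  · exact measurableSet_le (Finset.measurable_sum Aᶜ fun i _ => (measurable_pi_apply i).neg)
      measurable_const

lemma vol_DA {n : ℕ} (A : Finset (Fin n)) :
    volume (DA A) = ENNReal.ofReal (1 / (A.card)!) * ENNReal.ofReal (1 / ((n - A.card))!) := by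
  classical
  set g : Fin n → ℝ → ℝ := fun i t => if i ∈ A then t else -t with hg
  have hgm : ∀ i, MeasurePreserving (g i) volume volume := by
    intro i
    by_cases hi : i ∈ A
    · simp [hg, hi]; exact MeasurePreserving.id (volume : Measure ℝ)
    · simpa [hg, hi] using Measure.measurePreserving_neg (volume : Measure ℝ)
  have hmp : MeasurePreserving (fun (x : Fin n → ℝ) i => g i (x i)) volume volume :=
    MeasureTheory.volume_preserving_pi hgm
  have hpre : (fun (x : Fin n → ℝ) i => g i (x i)) ⁻¹' (DA A)
      = {x : Fin n → ℝ | (∀ i, 0 ≤ x i) ∧ (∑ i ∈ A, x i ≤ 1 ∧ ∑ i ∈ Aᶜ, x i ≤ 1)} := by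
    ext x
    simp only [Set.mem_preimage, DA, Set.mem_setOf_eq, hg, Finset.mem_compl]
    constructor
    · rintro ⟨h1, h2, h3, h4⟩
      refine ⟨fun i => ?_, ?_, ?_⟩
      · by_cases hi : i ∈ A
        · have := h1 i hi; simpa [hi] using this
        · have := h2 i hi; simp only [if_neg hi] at this; linarith
      · calc ∑ i ∈ A, x i = ∑ i ∈ A, (if i ∈ A then x i else -x i) :=
              Finset.sum_congr rfl fun i hi => by rw [if_pos hi]
          _ ≤ 1 := h3
      · calc ∑ i ∈ Aᶜ, x i = ∑ i ∈ Aᶜ, -(if i ∈ A then x i else -x i) :=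
              Finset.sum_congr rfl fun i hi => by
                rw [if_neg (Finset.mem_compl.mp hi), neg_neg]
          _ ≤ 1 := h4
    · rintro ⟨h1, h2, h3⟩
      refine ⟨fun i hi => by simpa [hi] using h1 i, fun i hi => by simp [hi, h1 i], ?_, ?_⟩
      · calc ∑ i ∈ A, (if i ∈ A then x i else -x i) = ∑ i ∈ A, x i :=
              Finset.sum_congr rfl fun i hi => by rw [if_pos hi]
          _ ≤ 1 := h2
      · calc ∑ i ∈ Aᶜ, -(if i ∈ A then x i else -x i) = ∑ i ∈ Aᶜ, x i :=
              Finset.sum_congr rfl fun i hi => by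
                rw [if_neg (Finset.mem_compl.mp hi), neg_neg]
          _ ≤ 1 := h3
  rw [← vol_split A, ← hpre, hmp.measure_preimage (meas_DA A).nullMeasurableSet]


-- the Nat identity
lemma choose_sq_sum (n : ℕ) : ∑ j ∈ range (n+1), (n.choose j) ^ 2 = (2*n).choose n := by
  rw [two_mul, Nat.add_choose_eq, Finset.Nat.sum_antidiagonal_eq_sum_range_succ_mk]
  refine Finset.sum_congr rfl fun j hj => ?_
  have hj' : j ≤ n := Nat.lt_succ_iff.mp (Finset.mem_range.mp hj)
  rw [sq]
  simp [Nat.choose_symm hj']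

lemma D_eq_union {n : ℕ} :
    {x : Fin n → ℝ | ∑ i, max (x i) 0 ≤ 1 ∧ ∑ i, max (-x i) 0 ≤ 1} = ⋃ A : Finset (Fin n), DA A := by
  classical
  ext x
  simp only [Set.mem_setOf_eq, Set.mem_iUnion]
  constructor
  · rintro ⟨h1, h2⟩
    refine ⟨Finset.univ.filter (fun i => 0 ≤ x i), ?_, ?_, ?_, ?_⟩
    · intro i hi; exact (Finset.mem_filter.mp hi).2
    · intro i hi
      have : ¬ 0 ≤ x i := fun h => hi (Finset.mem_filter.mpr ⟨Finset.mem_univ i, h⟩)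
      linarith [not_le.mp this]
    · calc ∑ i ∈ Finset.univ.filter (fun i => 0 ≤ x i), x i
          = ∑ i ∈ Finset.univ.filter (fun i => 0 ≤ x i), max (x i) 0 :=
            Finset.sum_congr rfl fun i hi => (max_eq_left (Finset.mem_filter.mp hi).2).symm
        _ ≤ ∑ i, max (x i) 0 :=
            Finset.sum_le_sum_of_subset_of_nonneg (Finset.subset_univ _)
              (fun i _ _ => le_max_right _ _)
        _ ≤ 1 := h1
    · calc ∑ i ∈ (Finset.univ.filter (fun i => 0 ≤ x i))ᶜ, -x i
          = ∑ i ∈ (Finset.univ.filter (fun i => 0 ≤ x i))ᶜ, max (-x i) 0 := by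
            refine Finset.sum_congr rfl fun i hi => ?_
            have : ¬ 0 ≤ x i := fun h =>
              (Finset.mem_compl.mp hi) (Finset.mem_filter.mpr ⟨Finset.mem_univ i, h⟩)
            exact (max_eq_left (by linarith [not_le.mp this])).symm
        _ ≤ ∑ i, max (-x i) 0 :=
            Finset.sum_le_sum_of_subset_of_nonneg (Finset.subset_univ _)
              (fun i _ _ => le_max_right _ _)
        _ ≤ 1 := h2
  · rintro ⟨A, h1, h2, h3, h4⟩
    constructor
    · calc ∑ i, max (x i) 0 = ∑ i ∈ A, max (x i) 0 + ∑ i ∈ Aᶜ, max (x i) 0 :=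
            (Finset.sum_add_sum_compl A _).symm
        _ = ∑ i ∈ A, x i + ∑ i ∈ Aᶜ, (0:ℝ) := by
            congr 1
            · exact Finset.sum_congr rfl fun i hi => max_eq_left (h1 i hi)
            · exact Finset.sum_congr rfl fun i hi =>
                max_eq_right (h2 i (Finset.mem_compl.mp hi))
        _ ≤ 1 := by simpa using h3
    · calc ∑ i, max (-x i) 0 = ∑ i ∈ A, max (-x i) 0 + ∑ i ∈ Aᶜ, max (-x i) 0 :=
            (Finset.sum_add_sum_compl A _).symm
        _ = ∑ i ∈ A, (0:ℝ) + ∑ i ∈ Aᶜ, -x i := by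
            congr 1
            · exact Finset.sum_congr rfl fun i hi => max_eq_right (by linarith [h1 i hi])
            · exact Finset.sum_congr rfl fun i hi =>
                max_eq_left (by linarith [h2 i (Finset.mem_compl.mp hi)])
        _ ≤ 1 := by simpa using h4

lemma vol_D {n : ℕ} :
    volume {x : Fin n → ℝ | ∑ i, max (x i) 0 ≤ 1 ∧ ∑ i, max (-x i) 0 ≤ 1}
      = ((2*n).choose n : ENNReal) * ENNReal.ofReal (1 / (n : ℕ)!) := by
  classical
  rw [D_eq_union]
  have hdisj : Pairwise (Function.onFun (AEDisjoint volume) fun A : Finset (Fin n) => DA A) := by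
    intro A B hAB
    have : ∃ i, (i ∈ A ∧ i ∉ B) ∨ (i ∈ B ∧ i ∉ A) := by
      by_contra h
      push_neg at h
      exact hAB (Finset.ext fun i => by
        have := h i
        tauto)
    obtain ⟨i, hi⟩ := this
    have hsub : DA A ∩ DA B ⊆ {x : Fin n → ℝ | x i = 0} := by
      rintro x ⟨hx1, hx2⟩
      rcases hi with ⟨hiA, hiB⟩ | ⟨hiB, hiA⟩
      · exact le_antisymm (hx2.2.1 i hiB) (hx1.1 i hiA)
      · exact le_antisymm (hx1.2.1 i hiA) (hx2.1 i hiB)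
    refine measure_mono_null hsub ?_
    rw [MeasureTheory.volume_pi]
    exact Measure.pi_hyperplane _ i 0
  rw [measure_iUnion₀ hdisj fun A => (meas_DA A).nullMeasurableSet, tsum_fintype]
  simp only [vol_DA]
  rw [← Finset.powerset_univ, Finset.sum_powerset]
  have hcard : (Finset.univ : Finset (Fin n)).card = n := Finset.card_univ.trans (Fintype.card_fin n)
  rw [hcard]
  have hinner : ∀ j ∈ range (n+1),
      (∑ A ∈ Finset.powersetCard j (Finset.univ : Finset (Fin n)),
        ENNReal.ofReal (1 / (A.card)!) * ENNReal.ofReal (1 / ((n - A.card))!))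
      = (n.choose j : ENNReal) * ENNReal.ofReal (1 / (j !) * (1 / ((n - j)!))) := by
    intro j hj
    have hterm : ∀ A ∈ Finset.powersetCard j (Finset.univ : Finset (Fin n)),
        ENNReal.ofReal (1 / (A.card)!) * ENNReal.ofReal (1 / ((n - A.card))!)
          = ENNReal.ofReal (1 / (j !) * (1 / ((n - j)!))) := by
      intro A hA
      rw [(Finset.mem_powersetCard.mp hA).2, ← ENNReal.ofReal_mul (by positivity)]
    rw [Finset.sum_congr rfl hterm, Finset.sum_const, Finset.card_powersetCard, hcard,
      nsmul_eq_mul]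
  rw [Finset.sum_congr rfl hinner]
  -- now the scalar identity
  have hne : ∀ m : ℕ, ((m ! : ℕ) : ℝ) ≠ 0 := fun m => Nat.cast_ne_zero.mpr (Nat.factorial_ne_zero m)
  have key : ∀ j ∈ range (n+1),
      (n.choose j : ENNReal) * ENNReal.ofReal (1 / (j !) * (1 / ((n - j)!)))
        = ENNReal.ofReal ((n.choose j)^2 * (1 / (n !))) := by
    intro j hj
    have hj' : j ≤ n := Nat.lt_succ_iff.mp (Finset.mem_range.mp hj)
    have hfact : (n.choose j : ℝ) * j ! * (n - j)! = n ! := by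
      exact_mod_cast congrArg (Nat.cast : ℕ → ℝ) (Nat.choose_mul_factorial_mul_factorial hj')
    have : (1 : ℝ) / (j !) * (1 / ((n - j)!)) = (n.choose j : ℝ) / (n !) := by
      field_simp
      nlinarith [hfact, hne j, hne (n-j)]
    rw [this, ← ENNReal.ofReal_natCast (n.choose j), ← ENNReal.ofReal_mul (by positivity)]
    congr 1
    push_cast
    ring
  rw [Finset.sum_congr rfl key, ← ENNReal.ofReal_sum_of_nonneg (fun j _ => by positivity),
    ← choose_sq_sum n]
  rw [← ENNReal.ofReal_natCast, ← ENNReal.ofReal_mul (by positivity)]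
  congr 1
  rw [← Finset.sum_mul]
  push_cast
  ring


variable {n : ℕ}

noncomputable abbrev ES (n : ℕ) := EuclideanSpace ℝ (Fin n)

def simΔ (n : ℕ) : Set (ES n) := {x | (∀ i, 0 ≤ x i) ∧ ∑ i, x i ≤ 1}

-- convexity
lemma convex_simΔ : Convex ℝ (simΔ n) := by
  intro x hx y hy a b ha hb hab
  constructor
  · intro i
    have : (a • x + b • y) i = a * x i + b * y i := by
      simp [PiLp.add_apply, PiLp.smul_apply, smul_eq_mul]
    rw [this]
    exact add_nonneg (mul_nonneg ha (hx.1 i)) (mul_nonneg hb (hy.1 i))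
  · have : ∑ i, (a • x + b • y) i = a * ∑ i, x i + b * ∑ i, y i := by
      simp only [PiLp.add_apply, PiLp.smul_apply, smul_eq_mul]
      rw [Finset.sum_add_distrib, Finset.mul_sum, Finset.mul_sum]
    rw [this]
    nlinarith [hx.2, hy.2]

lemma single_mem_simΔ (i : Fin n) : EuclideanSpace.single i (1:ℝ) ∈ simΔ n := by
  constructor
  · intro j
    rw [EuclideanSpace.single_apply]
    split <;> norm_num
  · simp [EuclideanSpace.single_apply]

lemma sum_single (x : ES n) : ∑ i, x i • EuclideanSpace.single i (1:ℝ) = x := by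
  have h := (EuclideanSpace.basisFun (Fin n) ℝ).toBasis.sum_repr x
  simpa [OrthonormalBasis.coe_toBasis_repr_apply, OrthonormalBasis.coe_toBasis,
    EuclideanSpace.basisFun_repr, EuclideanSpace.basisFun_apply] using h

lemma hull_eq_simΔ :
    convexHull ℝ (Set.range (Fin.cons 0 (fun i => EuclideanSpace.single i (1:ℝ)) :
      Fin (n+1) → ES n)) = simΔ n := by
  classical
  set q : Fin (n+1) → ES n := Fin.cons 0 (fun i => EuclideanSpace.single i (1:ℝ)) with hq
  apply Set.Subset.antisymm
  · apply convexHull_min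
    · rintro _ ⟨j, rfl⟩
      refine Fin.cases ?_ ?_ j
      · constructor
        · intro i; simp [hq]
        · simp [hq]
      · intro i
        rw [hq, Fin.cons_succ]
        exact single_mem_simΔ i
    · exact convex_simΔ
  · intro x hx
    set w : Fin (n+1) → ℝ := Fin.cons (1 - ∑ i, x i) (fun i => x i) with hw
    have hx_eq : ∑ j, w j • q j = x := by
      rw [Fin.sum_univ_succ]
      simp only [hw, hq, Fin.cons_zero, Fin.cons_succ, smul_zero, zero_add]
      exact sum_single x
    rw [← hx_eq]
    apply Convex.sum_mem (convex_convexHull ℝ _)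
    · intro j _
      refine Fin.cases ?_ ?_ j
      · simp only [hw, Fin.cons_zero]; linarith [hx.2]
      · intro i; simp only [hw, Fin.cons_succ]; exact hx.1 i
    · rw [Fin.sum_univ_succ]
      simp only [hw, Fin.cons_zero, Fin.cons_succ]
      ring
    · intro j _
      exact subset_convexHull ℝ _ ⟨j, rfl⟩

def simD (n : ℕ) : Set (ES n) := {x | ∑ i, max (x i) 0 ≤ 1 ∧ ∑ i, max (-x i) 0 ≤ 1}

lemma diff_simΔ : simΔ n + (-(simΔ n)) = simD n := by
  apply Set.Subset.antisymm
  · rintro z hz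
    rw [Set.mem_add] at hz
    obtain ⟨a, ha, c, hc, rfl⟩ := hz
    rw [Set.mem_neg] at hc
    have hc' : ∀ i, c i ≤ 0 := by
      intro i
      have := hc.1 i
      have hni : (-c) i = -(c i) := by simp [PiLp.neg_apply]
      linarith [hni ▸ this]
    constructor
    · calc ∑ i, max ((a + c) i) 0 ≤ ∑ i, a i := by
            apply Finset.sum_le_sum
            intro i _
            have : (a + c) i = a i + c i := by simp [PiLp.add_apply]
            rw [this]
            exact max_le (by linarith [hc' i]) (ha.1 i)
        _ ≤ 1 := ha.2
    · calc ∑ i, max (-(a + c) i) 0 ≤ ∑ i, (-c) i := by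
            apply Finset.sum_le_sum
            intro i _
            have h1 : -((a + c) i) = -(a i) - c i := by simp [PiLp.add_apply]; ring
            have h2 : (-c) i = -(c i) := by simp [PiLp.neg_apply]
            rw [h1, h2]
            exact max_le (by linarith [ha.1 i]) (by linarith [hc' i])
        _ ≤ 1 := hc.2
  · intro z hz
    set a : ES n := WithLp.toLp 2 (fun i => max (z i) 0 : Fin n → ℝ) with hA
    set b : ES n := WithLp.toLp 2 (fun i => max (-z i) 0 : Fin n → ℝ) with hB
    rw [Set.mem_add]
    refine ⟨a, ⟨fun i => le_max_right _ _, hz.1⟩, -b, ?_, ?_⟩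
    · rw [Set.mem_neg, neg_neg]
      exact ⟨fun i => le_max_right _ _, hz.2⟩
    · ext i
      show a i + (-b) i = z i
      have h2 : (-b) i = -(b i) := by simp [PiLp.neg_apply]
      rw [h2]
      show max (z i) 0 - max (-z i) 0 = z i
      rcases le_total 0 (z i) with h | h
      · rw [max_eq_left h, max_eq_right (by linarith)]; ring
      · rw [max_eq_right h, max_eq_left (by linarith)]; ring

end Aux
open Finset Nat in
lemma meas_D {n : ℕ} :
    MeasurableSet {x : Fin n → ℝ | ∑ i, max (x i) 0 ≤ 1 ∧ ∑ i, max (-x i) 0 ≤ 1} := by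
  refine MeasurableSet.inter ?_ ?_
  · exact measurableSet_le (Finset.measurable_sum univ fun i _ =>
      (measurable_pi_apply i).max measurable_const) measurable_const
  · exact measurableSet_le (Finset.measurable_sum univ fun i _ =>
      (measurable_pi_apply i).neg.max measurable_const) measurable_const

open Finset Nat in
lemma vol_simΔ {n : ℕ} : volume (simΔ n) = ENNReal.ofReal (1 / (n : ℕ)!) := by
  have e := EuclideanSpace.volume_preserving_symm_measurableEquiv_toLp (Fin n)
  have hpre : ⇑(MeasurableEquiv.toLp 2 (Fin n → ℝ)).symm ⁻¹'
      {x : Fin n → ℝ | (∀ i, 0 ≤ x i) ∧ ∑ i, x i ≤ 1} = simΔ n := rfl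
  rw [← hpre, e.measure_preimage (meas_corner 1).nullMeasurableSet,
    vol_corner n 1 zero_le_one, one_pow]

open Finset Nat in
lemma vol_simD {n : ℕ} :
    volume (simD n) = ((2*n).choose n : ENNReal) * ENNReal.ofReal (1 / (n : ℕ)!) := by
  have e := EuclideanSpace.volume_preserving_symm_measurableEquiv_toLp (Fin n)
  have hpre : ⇑(MeasurableEquiv.toLp 2 (Fin n → ℝ)).symm ⁻¹'
      {x : Fin n → ℝ | ∑ i, max (x i) 0 ≤ 1 ∧ ∑ i, max (-x i) 0 ≤ 1} = simD n := rfl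
  rw [← hpre, e.measure_preimage meas_D.nullMeasurableSet, vol_D]

/-- (Rogers–Shephard, equality case for simplices) For an `n`-dimensional simplex `T` in
`ℝ^n`, the difference body satisfies `vol(T + (−T)) = C(2n,n) · vol(T)`. -/
theorem vol_difference_body_simplex (n : ℕ) (hn : 1 ≤ n)
    (p : Fin (n + 1) → EuclideanSpace ℝ (Fin n)) (hp : AffineIndependent ℝ p)
    (T : Set (EuclideanSpace ℝ (Fin n))) (hT : T = convexHull ℝ (Set.range p)) :
    volume (T + (-T)) = ((2 * n).choose n : ENNReal) * volume T := by
  classical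
  set v : Fin n → ES n := fun i => p i.succ - p 0 with hv
  set L : ES n →ₗ[ℝ] ES n := (EuclideanSpace.basisFun (Fin n) ℝ).toBasis.constr ℝ v with hLdef
  have hL : ∀ i, L (EuclideanSpace.single i (1:ℝ)) = v i := by
    intro i
    have hb : (EuclideanSpace.basisFun (Fin n) ℝ).toBasis i = EuclideanSpace.single i (1:ℝ) := by
      rw [OrthonormalBasis.coe_toBasis, EuclideanSpace.basisFun_apply]
    rw [hLdef, ← hb, Module.Basis.constr_basis]
  set q : Fin (n+1) → ES n := Fin.cons 0 (fun i => EuclideanSpace.single i (1:ℝ)) with hq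
  set f : ES n →ᵃ[ℝ] ES n :=
    ((AffineEquiv.constVAdd ℝ (ES n) (p 0)).toAffineMap).comp L.toAffineMap with hfdef
  have hf : ∀ x, f x = p 0 + L x := fun x => rfl
  have hfq : ∀ j, f (q j) = p j := by
    intro j
    refine Fin.cases ?_ ?_ j
    · rw [hf]
      simp [hq]
    · intro i
      rw [hf, hq]
      simp only [Fin.cons_succ, hL i, hv]
      abel
  have hgT : ⇑f '' simΔ n = T := by
    rw [hT, ← hull_eq_simΔ, ← hq, AffineMap.image_convexHull, ← Set.range_comp]
    congr 1
    exact congrArg Set.range (funext hfq)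
  have hTT : T + (-T) = ⇑L '' (simΔ n + (-(simΔ n))) := by
    ext z
    constructor
    · intro h
      obtain ⟨x, hx, y, hy, rfl⟩ := Set.mem_add.mp h
      rw [Set.mem_neg] at hy
      rw [← hgT] at hx hy
      obtain ⟨a, ha, rfl⟩ := hx
      obtain ⟨b, hb, hba⟩ := hy
      refine ⟨a + (-b), Set.mem_add.mpr ⟨a, ha, -b, Set.mem_neg.mpr (by rwa [neg_neg]), rfl⟩, ?_⟩
      have hyy : y = -(f b) := by rw [hba, neg_neg]
      rw [map_add, map_neg, hyy, hf a, hf b]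
      abel
    · rintro ⟨w, hw, rfl⟩
      obtain ⟨a, ha, c, hc, rfl⟩ := Set.mem_add.mp hw
      rw [Set.mem_neg] at hc
      rw [← hgT]
      refine Set.mem_add.mpr ⟨f a, Set.mem_image_of_mem _ ha, -(f (-c)),
        Set.mem_neg.mpr (by rw [neg_neg]; exact Set.mem_image_of_mem _ hc), ?_⟩
      rw [hf a, hf (-c), map_add, map_neg]
      abel
  have him1 : volume (T + (-T))
      = ENNReal.ofReal |LinearMap.det L| * volume (simD n) := by
    rw [hTT, diff_simΔ]
    exact Measure.addHaar_image_linearMap volume L _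
  have him2 : volume T = ENNReal.ofReal |LinearMap.det L| * volume (simΔ n) := by
    rw [← hgT]
    have himg : ⇑f '' simΔ n = p 0 +ᵥ (⇑L '' simΔ n) := by
      rw [← Set.image_vadd, ← Set.image_comp]
      rfl
    rw [himg, measure_vadd, Measure.addHaar_image_linearMap]
  rw [him1, him2, vol_simD, vol_simΔ]
  ring
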